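/- Let κ be a regular cardinal and μ a (κ,κ⁺)-cardinal. Suppose F ⊆ κ⁺ is a finite nonempty set and there is X ∈ μ with rank(X) = η and F ⊆ X. If Y ∈ μ contains F and rank(Y) ≥ η, then there is X' ∈ (μ|Y) ∪ {Y} with F ⊆ X' and rank(X') = η; in particular X ∩ max(F) = X' ∩ max(F) ⊆ Y. -/

import Mathlib

open Set Cardinal Ordinal

noncomputable section

/-- Lower a (small) ordinal of `Ordinal.{1}` to `Ordinal.{0}` (the inverse of `Ordinal.lift`
on its range). -/
noncomputable def olower (o : Ordinal.{1}) : Ordinal.{0} :=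
  sInf {a : Ordinal.{0} | Ordinal.lift.{1} a = o}

/-- The order type of a set of ordinals. -/
noncomputable def otp (A : Set Ordinal.{0}) : Ordinal.{0} :=
  olower (Ordinal.type (Subrel ((· < ·) : Ordinal → Ordinal → Prop) (· ∈ A)))

/-- The canonical order-preserving transfer map from a set of ordinals `X` to a set of
ordinals `Y` of the same order type: an element `a ∈ X` is sent to the unique element of `Y`
occupying the same position. -/
noncomputable def omap (X Y : Set Ordinal) (a : Ordinal) : Ordinal :=
  sInf {b | b ∈ Y ∧ otp (Y ∩ Set.Iio b) = otp (X ∩ Set.Iio a)}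

/-- `IsStar X₁ X₂ X` says `X = X₁ * X₂`: `X₁` and `X₂` have the same order type,
`X = X₁ ∪ X₂`, and `X₁ ∩ X₂ < X₁ \ X₂ < X₂ \ X₁` elementwise. -/
def IsStar (X₁ X₂ X : Set Ordinal) : Prop :=
  otp X₁ = otp X₂ ∧ X = X₁ ∪ X₂ ∧
  (∀ a ∈ X₁ ∩ X₂, ∀ b ∈ X₁ \ X₂, a < b) ∧
  (∀ b ∈ X₁ \ X₂, ∀ c ∈ X₂ \ X₁, b < c)

set_option linter.deprecated false in
/-- A `(κ,κ⁺)`-cardinal (a neat simplified `(κ,1)`-morass presented as a family of sets):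
a family `μ ⊆ ℘_κ(κ⁺)` which is well-founded under strict inclusion, locally small,
homogeneous, directed, locally almost directed, covers `κ⁺` and is neat. -/
structure TwoCardinal (κ : Cardinal.{0}) where
  mu : Set (Set Ordinal)
  mem_sub : ∀ X ∈ mu, X ⊆ Set.Iio (Order.succ κ).ord
  mem_small : ∀ X ∈ mu, (otp X).card < κ
  wf : WellFounded fun X Y : mu => (X : Set Ordinal) ⊂ (Y : Set Ordinal)
  locSmall : ∀ X : mu,
    #{Z : mu // (Z : Set Ordinal) ⊂ (X : Set Ordinal)} < Cardinal.lift.{1} κ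
  homog : ∀ X Y : mu, (wf.apply X).rank = (wf.apply Y).rank →
    otp (X : Set Ordinal) = otp (Y : Set Ordinal) ∧
    {Z | Z ∈ mu ∧ Z ⊂ (Y : Set Ordinal)} =
      (fun Z => omap (X : Set Ordinal) (Y : Set Ordinal) '' Z) ''
        {Z | Z ∈ mu ∧ Z ⊂ (X : Set Ordinal)}
  directed : ∀ X ∈ mu, ∀ Y ∈ mu, ∃ Z ∈ mu, X ⊆ Z ∧ Y ⊆ Z
  locAlmostDirected : ∀ X : mu,
    (∀ Z₁ ∈ mu, ∀ Z₂ ∈ mu, Z₁ ⊂ (X : Set Ordinal) → Z₂ ⊂ (X : Set Ordinal) →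
      ∃ Z ∈ mu, Z ⊂ (X : Set Ordinal) ∧ Z₁ ⊆ Z ∧ Z₂ ⊆ Z) ∨
    (∃ X₁ X₂ : mu, (wf.apply X₁).rank = (wf.apply X₂).rank ∧
      IsStar (X₁ : Set Ordinal) (X₂ : Set Ordinal) (X : Set Ordinal) ∧
      {Z | Z ∈ mu ∧ Z ⊂ (X : Set Ordinal)} =
        {Z | Z ∈ mu ∧ Z ⊂ (X₁ : Set Ordinal)} ∪ {Z | Z ∈ mu ∧ Z ⊂ (X₂ : Set Ordinal)} ∪
          {(X₁ : Set Ordinal), (X₂ : Set Ordinal)})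
  covers : ⋃₀ mu = Set.Iio (Order.succ κ).ord
  neat : ∀ X : mu, (wf.apply X).rank ≠ 0 →
    (X : Set Ordinal) = ⋃₀ {Z | Z ∈ mu ∧ Z ⊂ (X : Set Ordinal)}

namespace TwoCardinal

variable {κ : Cardinal} (M : TwoCardinal κ)

set_option linter.deprecated false in
/-- The rank of an element of `μ` in the well-founded order `(μ, ⊂)`. -/
noncomputable def rank (X : M.mu) : Ordinal := olower ((M.wf.apply X).rank)

/-- The height of the well-founded order `(μ, ⊂)`. -/
noncomputable def ht : Ordinal := sSup (Set.range fun X : M.mu => M.rank X + 1)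

/-- The term `μ_ξ(α)` of the μ-sequence at `α`: equal to `X ∩ α` for any `X ∈ μ` of
rank `ξ` containing `α` (this is independent of the choice of `X`). -/
noncomputable def seq (α ξ : Ordinal) : Set Ordinal :=
  ⋃₀ {S | ∃ X : M.mu, M.rank X = ξ ∧ α ∈ (X : Set Ordinal) ∧
    S = (X : Set Ordinal) ∩ Set.Iio α}

/-- The μ-coloring `m(α,β) = min{rank X : α, β ∈ X ∈ μ}`. -/
noncomputable def mcol (a b : Ordinal) : Ordinal :=
  sInf {ξ | ∃ X : M.mu, M.rank X = ξ ∧ a ∈ (X : Set Ordinal) ∧ b ∈ (X : Set Ordinal)}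

end TwoCardinal


/-- Compatibility: rank in a well-founded relation. -/
noncomputable def WellFounded.rank {α : Type*} {r : α → α → Prop} (hwf : WellFounded r)
    (a : α) : Ordinal := (hwf.apply a).rank

theorem WellFounded.rank_eq {α : Type*} {r : α → α → Prop} (hwf : WellFounded r) {a : α} :
    hwf.rank a = ⨆ b : { b // r b a }, Order.succ (hwf.rank b) :=
  Acc.rank_eq _

theorem WellFounded.rank_lt_of_rel {α : Type*} {r : α → α → Prop} (hwf : WellFounded r)
    {a b : α} (h : r a b) : hwf.rank a < hwf.rank b :=
  Acc.rank_lt_of_rel _ h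

/-! ### Auxiliary theory of `olower`, `otp` and `omap`. -/

section OtpTheory

theorem olower_lift (a : Ordinal.{0}) : olower (Ordinal.lift.{1} a) = a := by
  have h : {b : Ordinal.{0} | Ordinal.lift.{1} b = Ordinal.lift.{1} a} = {a} := by
    ext b; simp [Ordinal.lift_inj]
  rw [olower, h, csInf_singleton]

theorem lift_olower {o : Ordinal.{1}} (h : ∃ a : Ordinal.{0}, Ordinal.lift.{1} a = o) :
    Ordinal.lift.{1} (olower o) = o := by
  obtain ⟨a, rfl⟩ := h; rw [olower_lift]

theorem exists_lift_eq_of_lt_univ {o : Ordinal.{1}} (h : o < Ordinal.univ.{0, 1}) :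
    ∃ a : Ordinal.{0}, Ordinal.lift.{1} a = o := by
  have := Ordinal.liftPrincipalSeg.{0,1}.mem_range_of_rel_top
    (b := o) (by rwa [Ordinal.liftPrincipalSeg_top.{0,1}])
  obtain ⟨a, ha⟩ := this
  exact ⟨a, by rw [← Ordinal.liftPrincipalSeg_coe.{0,1}]; exact ha⟩

theorem lift_lt_univ' (a : Ordinal.{0}) : Ordinal.lift.{1} a < Ordinal.univ.{0, 1} := by
  have := Ordinal.liftPrincipalSeg.{0,1}.lt_top a
  rwa [Ordinal.liftPrincipalSeg_top.{0,1}, Ordinal.liftPrincipalSeg_coe.{0,1}] at this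

/-- The raw (universe `1`) order type of a set of ordinals. -/
noncomputable def styp (A : Set Ordinal.{0}) : Ordinal.{1} :=
  Ordinal.type (Subrel ((· < ·) : Ordinal → Ordinal → Prop) (· ∈ A))

theorem otp_eq_olower_styp (A : Set Ordinal.{0}) : otp A = olower (styp A) := rfl

theorem styp_le_of_subset {A B : Set Ordinal.{0}} (h : A ⊆ B) : styp A ≤ styp B := by
  rw [styp, styp, Ordinal.type_le_iff']
  exact ⟨⟨⟨Set.inclusion h, Set.inclusion_injective h⟩, Iff.rfl⟩⟩

theorem styp_Iio (o : Ordinal.{0}) : styp (Set.Iio o) = Ordinal.lift.{1} o := by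
  rw [styp]
  change Ordinal.type (Subrel ((· < ·) : Ordinal → Ordinal → Prop) (· < o)) = _
  rw [Ordinal.type_subrel, Ordinal.typein_ordinal]

theorem lift_otp {A : Set Ordinal.{0}} {o : Ordinal.{0}} (hA : A ⊆ Set.Iio o) :
    Ordinal.lift.{1} (otp A) = styp A := by
  apply lift_olower
  have h1 : styp A ≤ Ordinal.lift.{1} o := by
    rw [← styp_Iio]; exact styp_le_of_subset hA
  obtain ⟨a, ha⟩ := Ordinal.mem_range_lift_of_le h1
  exact ⟨a, ha⟩

theorem styp_inter_Iio {A : Set Ordinal.{0}} {b : Ordinal.{0}} (hb : b ∈ A) :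
    styp (A ∩ Set.Iio b) =
      Ordinal.typein (Subrel ((· < ·) : Ordinal → Ordinal → Prop) (· ∈ A)) ⟨b, hb⟩ := by
  rw [← Ordinal.type_subrel, styp, Ordinal.type_eq]
  exact ⟨⟨⟨fun x => ⟨⟨x.1, x.2.1⟩, x.2.2⟩, fun y => ⟨y.1.1, y.1.2, y.2⟩,
    fun x => rfl, fun y => rfl⟩, Iff.rfl⟩⟩

theorem lift_otp_inter_Iio {A : Set Ordinal.{0}} {o b : Ordinal.{0}} (hA : A ⊆ Set.Iio o)
    (hb : b ∈ A) :
    Ordinal.lift.{1} (otp (A ∩ Set.Iio b)) =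
      Ordinal.typein (Subrel ((· < ·) : Ordinal → Ordinal → Prop) (· ∈ A)) ⟨b, hb⟩ := by
  rw [lift_otp (fun x hx => hA hx.1), styp_inter_Iio]

theorem otp_seg_lt_otp_seg {A : Set Ordinal.{0}} {o a b : Ordinal.{0}} (hA : A ⊆ Set.Iio o)
    (ha : a ∈ A) (hb : b ∈ A) (h : a < b) :
    otp (A ∩ Set.Iio a) < otp (A ∩ Set.Iio b) := by
  rw [← Ordinal.lift_lt.{1}, lift_otp_inter_Iio hA ha, lift_otp_inter_Iio hA hb]
  exact (Ordinal.typein_lt_typein _).2 h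

theorem lt_of_otp_seg_lt {A : Set Ordinal.{0}} {o a b : Ordinal.{0}} (hA : A ⊆ Set.Iio o)
    (ha : a ∈ A) (hb : b ∈ A) (h : otp (A ∩ Set.Iio a) < otp (A ∩ Set.Iio b)) : a < b := by
  rcases lt_trichotomy a b with h' | rfl | h'
  · exact h'
  · exact absurd h (lt_irrefl _)
  · exact absurd (otp_seg_lt_otp_seg hA hb ha h') (lt_asymm h)

theorem otp_seg_injOn {A : Set Ordinal.{0}} {o a b : Ordinal.{0}} (hA : A ⊆ Set.Iio o)
    (ha : a ∈ A) (hb : b ∈ A) (h : otp (A ∩ Set.Iio a) = otp (A ∩ Set.Iio b)) : a = b := by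
  rcases lt_trichotomy a b with h' | h' | h'
  · exact absurd (otp_seg_lt_otp_seg hA ha hb h') (by rw [h]; exact lt_irrefl _)
  · exact h'
  · exact absurd (otp_seg_lt_otp_seg hA hb ha h') (by rw [h]; exact lt_irrefl _)

theorem otp_seg_lt_otp {A : Set Ordinal.{0}} {o b : Ordinal.{0}} (hA : A ⊆ Set.Iio o)
    (hb : b ∈ A) : otp (A ∩ Set.Iio b) < otp A := by
  rw [← Ordinal.lift_lt.{1}, lift_otp_inter_Iio hA hb, lift_otp hA]
  exact Ordinal.typein_lt_type _ _

theorem otp_seg_surj {A : Set Ordinal.{0}} {o : Ordinal.{0}} (hA : A ⊆ Set.Iio o)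
    {γ : Ordinal.{0}} (hγ : γ < otp A) : ∃ b ∈ A, otp (A ∩ Set.Iio b) = γ := by
  have h1 : Ordinal.lift.{1} γ < styp A := by
    rw [← lift_otp hA]; exact Ordinal.lift_lt.2 hγ
  obtain ⟨⟨b, hb⟩, hb2⟩ := Ordinal.typein_surj _ h1
  refine ⟨b, hb, ?_⟩
  rw [← Ordinal.lift_inj.{1}, lift_otp_inter_Iio hA hb, hb2]

end OtpTheory

section OmapTheory

variable {X Y : Set Ordinal.{0}} {o : Ordinal.{0}}

theorem omap_spec (hX : X ⊆ Set.Iio o) (hY : Y ⊆ Set.Iio o) (hotp : otp X = otp Y)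
    {a : Ordinal} (ha : a ∈ X) :
    omap X Y a ∈ Y ∧ otp (Y ∩ Set.Iio (omap X Y a)) = otp (X ∩ Set.Iio a) := by
  obtain ⟨b, hbY, hbeq⟩ := otp_seg_surj hY (hotp ▸ otp_seg_lt_otp hX ha)
  have hset : {b' | b' ∈ Y ∧ otp (Y ∩ Set.Iio b') = otp (X ∩ Set.Iio a)} = {b} := by
    ext b'
    constructor
    · rintro ⟨hb'Y, hb'⟩
      exact otp_seg_injOn hY hb'Y hbY (by rw [hb', hbeq])
    · rintro rfl
      exact ⟨hbY, hbeq⟩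
  rw [omap, hset, csInf_singleton]
  exact ⟨hbY, hbeq⟩

theorem omap_eq (hX : X ⊆ Set.Iio o) (hY : Y ⊆ Set.Iio o) (hotp : otp X = otp Y)
    {a b : Ordinal} (ha : a ∈ X) (hb : b ∈ Y)
    (h : otp (Y ∩ Set.Iio b) = otp (X ∩ Set.Iio a)) : omap X Y a = b := by
  obtain ⟨h1, h2⟩ := omap_spec hX hY hotp ha
  exact otp_seg_injOn hY h1 hb (by rw [h2, h])

theorem omap_mem (hX : X ⊆ Set.Iio o) (hY : Y ⊆ Set.Iio o) (hotp : otp X = otp Y)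
    {a : Ordinal} (ha : a ∈ X) : omap X Y a ∈ Y :=
  (omap_spec hX hY hotp ha).1

theorem omap_self_eq (hX : X ⊆ Set.Iio o) (hY : Y ⊆ Set.Iio o) (hotp : otp X = otp Y)
    {a : Ordinal} (ha : a ∈ X) (ha' : a ∈ Y) (hseg : X ∩ Set.Iio a = Y ∩ Set.Iio a) :
    omap X Y a = a :=
  omap_eq hX hY hotp ha ha' (by rw [hseg])

theorem omap_strictMonoOn (hX : X ⊆ Set.Iio o) (hY : Y ⊆ Set.Iio o) (hotp : otp X = otp Y)
    {a a' : Ordinal} (ha : a ∈ X) (ha' : a' ∈ X) (h : a < a') : omap X Y a < omap X Y a' := by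
  obtain ⟨h1, h2⟩ := omap_spec hX hY hotp ha
  obtain ⟨h1', h2'⟩ := omap_spec hX hY hotp ha'
  exact lt_of_otp_seg_lt hY h1 h1' (by rw [h2, h2']; exact otp_seg_lt_otp_seg hX ha ha' h)

theorem omap_injOn (hX : X ⊆ Set.Iio o) (hY : Y ⊆ Set.Iio o) (hotp : otp X = otp Y) :
    Set.InjOn (omap X Y) X := by
  intro a ha a' ha' h
  rcases lt_trichotomy a a' with h' | h' | h'
  · exact absurd (omap_strictMonoOn hX hY hotp ha ha' h') (by rw [h]; exact lt_irrefl _)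
  · exact h'
  · exact absurd (omap_strictMonoOn hX hY hotp ha' ha h') (by rw [h]; exact lt_irrefl _)

theorem omap_surjOn (hX : X ⊆ Set.Iio o) (hY : Y ⊆ Set.Iio o) (hotp : otp X = otp Y) :
    ∀ b ∈ Y, ∃ a ∈ X, omap X Y a = b := by
  intro b hb
  obtain ⟨a, haX, haeq⟩ := otp_seg_surj hX (hotp.symm ▸ otp_seg_lt_otp hY hb)
  exact ⟨a, haX, omap_eq hX hY hotp haX hb (by rw [haeq])⟩

end OmapTheory


/-! ### Basic facts about `(κ,κ⁺)`-cardinals. -/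

theorem ssub_trans' {A B C : Set Ordinal} (h1 : A ⊆ B) (h2 : B ⊂ C) : A ⊂ C := by
  rw [Set.ssubset_def] at h2 ⊢
  exact ⟨h1.trans h2.1, fun hC => h2.2 (hC.trans h1)⟩

namespace TwoCardinal

set_option linter.deprecated false

variable {κ : Cardinal.{0}} (M : TwoCardinal κ)

theorem sub' (X : M.mu) : (X : Set Ordinal) ⊆ Set.Iio (Order.succ κ).ord :=
  M.mem_sub X X.2

theorem rank_lt_of_ssubset {Z X : M.mu} (h : (Z : Set Ordinal) ⊂ (X : Set Ordinal)) :
    M.wf.rank Z < M.wf.rank X := M.wf.rank_lt_of_rel h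

theorem rank_le_of_subset {Z X : M.mu} (h : (Z : Set Ordinal) ⊆ (X : Set Ordinal)) :
    M.wf.rank Z ≤ M.wf.rank X := by
  rcases h.ssubset_or_eq with h' | h'
  · exact (M.rank_lt_of_ssubset h').le
  · rw [Subtype.ext h']

theorem rank_lt_univ (X : M.mu) : M.wf.rank X < Ordinal.univ.{0, 1} := by
  induction X using M.wf.induction with
  | _ X IH =>
    rw [M.wf.rank_eq]
    apply Ordinal.iSup_lt_ord
    · rw [Ordinal.cof_univ]
      exact lt_trans (M.locSmall X) (Cardinal.lift_lt_univ κ)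
    · intro b
      obtain ⟨a, ha⟩ := exists_lift_eq_of_lt_univ (IH b.1 b.2)
      rw [← ha, ← Ordinal.lift_succ]
      exact lift_lt_univ' _

theorem lift_rank (X : M.mu) : Ordinal.lift.{1} (M.rank X) = M.wf.rank X :=
  lift_olower (exists_lift_eq_of_lt_univ (M.rank_lt_univ X))

theorem rank_le_rank_iff {X Y : M.mu} : M.rank X ≤ M.rank Y ↔ M.wf.rank X ≤ M.wf.rank Y := by
  rw [← M.lift_rank X, ← M.lift_rank Y, Ordinal.lift_le]

theorem rank_eq_rank_iff {X Y : M.mu} : M.rank X = M.rank Y ↔ M.wf.rank X = M.wf.rank Y := by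
  rw [← M.lift_rank X, ← M.lift_rank Y, Ordinal.lift_inj]

/-! ### Homogeneity consequences -/

theorem homog_mem_image {X Y : M.mu} (hr : M.wf.rank X = M.wf.rank Y) {Z : Set Ordinal}
    (hZ : Z ∈ M.mu) (hZY : Z ⊂ (Y : Set Ordinal)) :
    ∃ V, V ∈ M.mu ∧ V ⊂ (X : Set Ordinal) ∧
      omap (X : Set Ordinal) (Y : Set Ordinal) '' V = Z := by
  have h := (M.homog X Y hr).2
  have hmem : Z ∈ {Z | Z ∈ M.mu ∧ Z ⊂ (Y : Set Ordinal)} := ⟨hZ, hZY⟩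
  rw [h] at hmem
  obtain ⟨V, ⟨hV1, hV2⟩, hV3⟩ := hmem
  exact ⟨V, hV1, hV2, hV3⟩

theorem homog_image_mem {X Y : M.mu} (hr : M.wf.rank X = M.wf.rank Y) {V : Set Ordinal}
    (hV : V ∈ M.mu) (hVX : V ⊂ (X : Set Ordinal)) :
    omap (X : Set Ordinal) (Y : Set Ordinal) '' V ∈ M.mu ∧
      omap (X : Set Ordinal) (Y : Set Ordinal) '' V ⊂ (Y : Set Ordinal) := by
  have h := (M.homog X Y hr).2
  have hmem : omap (X : Set Ordinal) (Y : Set Ordinal) '' V ∈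
      (fun Z => omap (X : Set Ordinal) (Y : Set Ordinal) '' Z) ''
        {Z | Z ∈ M.mu ∧ Z ⊂ (X : Set Ordinal)} :=
    Set.mem_image_of_mem _ ⟨hV, hVX⟩
  rw [← h] at hmem
  exact hmem

theorem rank_image {X Y : M.mu} (hr : M.wf.rank X = M.wf.rank Y) :
    ∀ V : M.mu, (V : Set Ordinal) ⊂ (X : Set Ordinal) → ∀ W : M.mu,
      (W : Set Ordinal) = omap (X : Set Ordinal) (Y : Set Ordinal) '' (V : Set Ordinal) →
      M.wf.rank W = M.wf.rank V := by
  intro V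
  induction V using M.wf.induction with
  | _ V IH =>
    intro hVX W hW
    have hotp := (M.homog X Y hr).1
    have hinj := omap_injOn (M.sub' X) (M.sub' Y) hotp
    have hWY : (W : Set Ordinal) ⊂ (Y : Set Ordinal) := by
      rw [hW]; exact (M.homog_image_mem hr V.2 hVX).2
    apply le_antisymm
    · rw [M.wf.rank_eq (a := W)]
      apply Ordinal.iSup_le
      rintro ⟨b, hb⟩
      have hbY : (b : Set Ordinal) ⊂ (Y : Set Ordinal) := ssub_trans' hb.1 hWY
      obtain ⟨U, hU1, hU2, hU3⟩ := M.homog_mem_image hr b.2 hbY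
      have hUV : U ⊂ (V : Set Ordinal) := by
        rw [← hinj.image_ssubset_image_iff hU2.1 hVX.1, hU3, ← hW]
        exact hb
      have hrkb : M.wf.rank b = M.wf.rank (⟨U, hU1⟩ : M.mu) :=
        IH ⟨U, hU1⟩ hUV (ssub_trans' hUV.1 hVX) b hU3.symm
      rw [hrkb]
      exact Order.succ_le_of_lt (M.rank_lt_of_ssubset (X := V) hUV)
    · rw [M.wf.rank_eq (a := V)]
      apply Ordinal.iSup_le
      rintro ⟨b, hb⟩
      have hbX : (b : Set Ordinal) ⊂ (X : Set Ordinal) := ssub_trans' hb.1 hVX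
      obtain ⟨hmem, -⟩ := M.homog_image_mem hr b.2 hbX
      have hrkb : M.wf.rank (⟨omap (X : Set Ordinal) (Y : Set Ordinal) '' b, hmem⟩ : M.mu) =
          M.wf.rank b := IH b hb hbX ⟨omap _ _ '' b, hmem⟩ rfl
      have himg : omap (X : Set Ordinal) (Y : Set Ordinal) '' b ⊂ (W : Set Ordinal) := by
        rw [hW, hinj.image_ssubset_image_iff hbX.1 hVX.1]
        exact hb
      rw [← hrkb]
      exact Order.succ_le_of_lt
        (M.rank_lt_of_ssubset (Z := ⟨omap _ _ '' b, hmem⟩) (X := W) himg)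

/-! ### Star decomposition facts -/

theorem star_mem {W W₁ W₂ : M.mu}
    (hdec : {Z | Z ∈ M.mu ∧ Z ⊂ (W : Set Ordinal)} =
      {Z | Z ∈ M.mu ∧ Z ⊂ (W₁ : Set Ordinal)} ∪ {Z | Z ∈ M.mu ∧ Z ⊂ (W₂ : Set Ordinal)} ∪
        {(W₁ : Set Ordinal), (W₂ : Set Ordinal)}) :
    (W₁ : Set Ordinal) ⊂ (W : Set Ordinal) ∧ (W₂ : Set Ordinal) ⊂ (W : Set Ordinal) := by
  constructor
  · have : (W₁ : Set Ordinal) ∈ {Z | Z ∈ M.mu ∧ Z ⊂ (W : Set Ordinal)} := by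
      rw [hdec]; exact Or.inr (Set.mem_insert _ _)
    exact this.2
  · have : (W₂ : Set Ordinal) ∈ {Z | Z ∈ M.mu ∧ Z ⊂ (W : Set Ordinal)} := by
      rw [hdec]; exact Or.inr (Set.mem_insert_iff.2 (Or.inr rfl))
    exact this.2

theorem star_diff_nonempty {W W₁ W₂ : M.mu} (hr : M.wf.rank W₁ = M.wf.rank W₂)
    (hstar : IsStar (W₁ : Set Ordinal) (W₂ : Set Ordinal) (W : Set Ordinal))
    (hW₁ : (W₁ : Set Ordinal) ⊂ (W : Set Ordinal)) :
    ((W₁ : Set Ordinal) \ (W₂ : Set Ordinal)).Nonempty ∧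
      ((W₂ : Set Ordinal) \ (W₁ : Set Ordinal)).Nonempty := by
  have hne : (W₁ : Set Ordinal) ≠ (W₂ : Set Ordinal) := by
    intro h
    have : (W : Set Ordinal) = (W₁ : Set Ordinal) := by
      rw [hstar.2.1, ← h, Set.union_self]
    rw [this] at hW₁
    exact hW₁.2 hW₁.1
  constructor
  · rw [Set.nonempty_iff_ne_empty]
    intro h
    have hsub : (W₁ : Set Ordinal) ⊆ (W₂ : Set Ordinal) := Set.diff_eq_empty.1 h
    rcases hsub.ssubset_or_eq with h' | h'
    · exact absurd hr (ne_of_lt (M.rank_lt_of_ssubset h'))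
    · exact hne h'
  · rw [Set.nonempty_iff_ne_empty]
    intro h
    have hsub : (W₂ : Set Ordinal) ⊆ (W₁ : Set Ordinal) := Set.diff_eq_empty.1 h
    rcases hsub.ssubset_or_eq with h' | h'
    · exact absurd hr.symm (ne_of_lt (M.rank_lt_of_ssubset h'))
    · exact hne h'.symm

theorem star_seg {W W₁ W₂ : M.mu} (hr : M.wf.rank W₁ = M.wf.rank W₂)
    (hstar : IsStar (W₁ : Set Ordinal) (W₂ : Set Ordinal) (W : Set Ordinal))
    (hW₁ : (W₁ : Set Ordinal) ⊂ (W : Set Ordinal)) :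
    ∀ γ ∈ (W₁ : Set Ordinal) ∩ (W₂ : Set Ordinal),
      (W₁ : Set Ordinal) ∩ Set.Iio γ = (W₂ : Set Ordinal) ∩ Set.Iio γ := by
  obtain ⟨hd1, _⟩ := M.star_diff_nonempty hr hstar hW₁
  obtain ⟨b₀, hb₀⟩ := hd1
  intro γ hγ
  ext δ
  constructor
  · rintro ⟨hδ1, hδ2⟩
    refine ⟨?_, hδ2⟩
    by_contra hδ3
    exact absurd hδ2 (not_lt.2 (le_of_lt (hstar.2.2.1 γ hγ δ ⟨hδ1, hδ3⟩)))
  · rintro ⟨hδ1, hδ2⟩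
    refine ⟨?_, hδ2⟩
    by_contra hδ3
    have h1 : γ < b₀ := hstar.2.2.1 γ hγ b₀ hb₀
    have h2 : b₀ < δ := hstar.2.2.2 b₀ hb₀ δ ⟨hδ1, hδ3⟩
    exact absurd hδ2 (not_lt.2 (le_of_lt (h1.trans h2)))

/-! ### The coherence lemma -/

theorem coh_step {W₁ W₂ : M.mu} (hr : M.wf.rank W₁ = M.wf.rank W₂)
    (hseg : ∀ γ ∈ (W₁ : Set Ordinal) ∩ (W₂ : Set Ordinal),
      (W₁ : Set Ordinal) ∩ Set.Iio γ = (W₂ : Set Ordinal) ∩ Set.Iio γ)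
    (P₁ : ∀ X Z : M.mu, (X : Set Ordinal) ⊆ (W₁ : Set Ordinal) →
      (Z : Set Ordinal) ⊆ (W₁ : Set Ordinal) → M.wf.rank X ≤ M.wf.rank Z →
      ∀ β, β ∈ (X : Set Ordinal) → β ∈ (Z : Set Ordinal) →
        (X : Set Ordinal) ∩ Set.Iio β ⊆ (Z : Set Ordinal))
    {X Z : M.mu} (hX : (X : Set Ordinal) ⊆ (W₁ : Set Ordinal))
    (hZ : (Z : Set Ordinal) ⊆ (W₂ : Set Ordinal)) (hrk : M.wf.rank X ≤ M.wf.rank Z)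
    {β : Ordinal} (hβX : β ∈ (X : Set Ordinal)) (hβZ : β ∈ (Z : Set Ordinal)) :
    (X : Set Ordinal) ∩ Set.Iio β ⊆ (Z : Set Ordinal) := by
  have hβ12 : β ∈ (W₁ : Set Ordinal) ∩ (W₂ : Set Ordinal) := ⟨hX hβX, hZ hβZ⟩
  rcases hZ.ssubset_or_eq with hZ' | hZ'
  · -- Z is a proper subset of W₂; pull it back to W₁
    have hotp := (M.homog W₁ W₂ hr).1
    have hb₁ := M.sub' W₁
    have hb₂ := M.sub' W₂
    have hinj := omap_injOn hb₁ hb₂ hotp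
    obtain ⟨Z', hZ'mu, hZ'W₁, hgZ'⟩ := M.homog_mem_image hr Z.2 hZ'
    have hrkZ' : M.wf.rank Z = M.wf.rank (⟨Z', hZ'mu⟩ : M.mu) :=
      M.rank_image hr ⟨Z', hZ'mu⟩ hZ'W₁ Z hgZ'.symm
    have hgβ : omap (W₁ : Set Ordinal) (W₂ : Set Ordinal) β = β :=
      omap_self_eq hb₁ hb₂ hotp hβ12.1 hβ12.2 (hseg β hβ12)
    have hβZ' : β ∈ Z' := by
      have : β ∈ omap (W₁ : Set Ordinal) (W₂ : Set Ordinal) '' Z' := by rw [hgZ']; exact hβZ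
      obtain ⟨β', hβ'Z', hgβ'⟩ := this
      have : β' = β := hinj (hZ'W₁.1 hβ'Z') hβ12.1 (by rw [hgβ', hgβ])
      rwa [this] at hβ'Z'
    have hsub : (X : Set Ordinal) ∩ Set.Iio β ⊆ Z' :=
      P₁ X ⟨Z', hZ'mu⟩ hX hZ'W₁.1 (hrk.trans hrkZ'.le) β hβX hβZ'
    intro γ hγ
    have hγW₁ : γ ∈ (W₁ : Set Ordinal) := hX hγ.1
    have hγ12 : γ ∈ (W₁ : Set Ordinal) ∩ (W₂ : Set Ordinal) := by
      have : γ ∈ (W₂ : Set Ordinal) ∩ Set.Iio β := by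
        rw [← hseg β hβ12]; exact ⟨hγW₁, hγ.2⟩
      exact ⟨hγW₁, this.1⟩
    have hgγ : omap (W₁ : Set Ordinal) (W₂ : Set Ordinal) γ = γ :=
      omap_self_eq hb₁ hb₂ hotp hγ12.1 hγ12.2 (hseg γ hγ12)
    rw [← hgZ']
    exact ⟨γ, hsub hγ, hgγ⟩
  · -- Z = W₂
    intro γ hγ
    have : γ ∈ (W₂ : Set Ordinal) ∩ Set.Iio β := by
      rw [← hseg β hβ12]; exact ⟨hX hγ.1, hγ.2⟩
    rw [← hZ'] at this
    exact this.1

theorem coh_aux : ∀ W X Z : M.mu, (X : Set Ordinal) ⊆ (W : Set Ordinal) →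
    (Z : Set Ordinal) ⊆ (W : Set Ordinal) → M.wf.rank X ≤ M.wf.rank Z →
    ∀ β, β ∈ (X : Set Ordinal) → β ∈ (Z : Set Ordinal) →
      (X : Set Ordinal) ∩ Set.Iio β ⊆ (Z : Set Ordinal) := by
  intro W
  induction W using M.wf.induction with
  | _ W IH =>
  intro X Z hXW hZW hrk β hβX hβZ
  rcases hZW.ssubset_or_eq with hZW' | hZW'
  swap
  · intro γ hγ
    rw [hZW']
    exact hXW hγ.1
  rcases hXW.ssubset_or_eq with hXW' | hXW'
  swap
  · exfalso
    have h1 : M.wf.rank Z < M.wf.rank W := M.rank_lt_of_ssubset hZW'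
    rw [← Subtype.ext hXW'] at h1
    exact absurd hrk h1.not_ge
  rcases M.locAlmostDirected W with ha | ⟨W₁, W₂, hr12, hstar, hdec⟩
  · obtain ⟨V, hVmu, hVW, hXV, hZV⟩ := ha X X.2 Z Z.2 hXW' hZW'
    exact IH ⟨V, hVmu⟩ hVW X Z hXV hZV hrk β hβX hβZ
  · obtain ⟨hW₁, hW₂⟩ := M.star_mem hdec
    have hseg := M.star_seg hr12 hstar hW₁
    have hseg' : ∀ γ ∈ (W₂ : Set Ordinal) ∩ (W₁ : Set Ordinal),
        (W₂ : Set Ordinal) ∩ Set.Iio γ = (W₁ : Set Ordinal) ∩ Set.Iio γ := by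
      intro γ hγ
      exact (hseg γ ⟨hγ.2, hγ.1⟩).symm
    have memCases : ∀ U : M.mu, (U : Set Ordinal) ⊂ (W : Set Ordinal) →
        (U : Set Ordinal) ⊆ (W₁ : Set Ordinal) ∨ (U : Set Ordinal) ⊆ (W₂ : Set Ordinal) := by
      intro U hU
      have : (U : Set Ordinal) ∈ {Z | Z ∈ M.mu ∧ Z ⊂ (W : Set Ordinal)} := ⟨U.2, hU⟩
      rw [hdec] at this
      rcases this with (⟨_, h⟩ | ⟨_, h⟩) | h
      · exact Or.inl h.1
      · exact Or.inr h.1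
      · rcases Set.mem_insert_iff.1 h with h | h
        · exact Or.inl h.le
        · exact Or.inr (Set.mem_singleton_iff.1 h).le
    rcases memCases X hXW' with hX1 | hX2 <;> rcases memCases Z hZW' with hZ1 | hZ2
    · exact IH W₁ hW₁ X Z hX1 hZ1 hrk β hβX hβZ
    · exact M.coh_step hr12 hseg (IH W₁ hW₁) hX1 hZ2 hrk hβX hβZ
    · exact M.coh_step hr12.symm hseg' (IH W₂ hW₂) hX2 hZ1 hrk hβX hβZ
    · exact IH W₂ hW₂ X Z hX2 hZ2 hrk β hβX hβZ

theorem coh {X Z : M.mu} (hrk : M.wf.rank X ≤ M.wf.rank Z) {β : Ordinal}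
    (hβX : β ∈ (X : Set Ordinal)) (hβZ : β ∈ (Z : Set Ordinal)) :
    (X : Set Ordinal) ∩ Set.Iio β ⊆ (Z : Set Ordinal) := by
  obtain ⟨W, hWmu, hXW, hZW⟩ := M.directed X X.2 Z Z.2
  exact M.coh_aux ⟨W, hWmu⟩ X Z hXW hZW hrk β hβX hβZ

end TwoCardinal


/-! ### The internal localization lemma -/

namespace TwoCardinal

set_option linter.deprecated false

variable {κ : Cardinal.{0}} (M : TwoCardinal κ)

theorem loc_aux : ∀ Y X : M.mu, ∀ F : Finset Ordinal, ↑F ⊆ (X : Set Ordinal) →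
    ↑F ⊆ (Y : Set Ordinal) → M.wf.rank X ≤ M.wf.rank Y →
    ∃ X' : M.mu,
      ((X' : Set Ordinal) ⊂ (Y : Set Ordinal) ∨ (X' : Set Ordinal) = (Y : Set Ordinal)) ∧
      ↑F ⊆ (X' : Set Ordinal) ∧ M.wf.rank X' = M.wf.rank X := by
  intro Y
  induction Y using M.wf.induction with
  | _ Y IH =>
  intro X F hFX hFY hrk
  rcases hrk.eq_or_lt with heq | hlt
  · exact ⟨Y, Or.inr rfl, hFY, heq.symm⟩
  have hY0 : M.wf.rank Y ≠ 0 := by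
    intro h; rw [h] at hlt; exact absurd hlt (not_lt_zero (a := _))
  have hneat := M.neat Y hY0
  rcases M.locAlmostDirected Y with ha | ⟨X₁, X₂, hr12, hstar, hdec⟩
  · -- almost directed case
    have hlt' := hlt
    rw [M.wf.rank_eq (a := Y), Ordinal.lt_iSup_iff] at hlt'
    obtain ⟨⟨Z₁, hZ₁Y⟩, hZ₁⟩ := hlt'
    rw [Order.lt_succ_iff] at hZ₁
    have merge : ∀ s : Finset Ordinal, ↑s ⊆ (Y : Set Ordinal) →
        ∃ Z : M.mu, (Z : Set Ordinal) ⊂ (Y : Set Ordinal) ∧ ↑s ⊆ (Z : Set Ordinal) ∧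
          M.wf.rank X ≤ M.wf.rank Z := by
      intro s
      induction s using Finset.induction_on with
      | empty => exact fun _ => ⟨Z₁, hZ₁Y, by simp, hZ₁⟩
      | @insert a s _ ih =>
        intro hins
        rw [Finset.coe_insert, Set.insert_subset_iff] at hins
        obtain ⟨haY, hsY⟩ := hins
        obtain ⟨Z, hZY, hsZ, hrkZ⟩ := ih hsY
        have haU : a ∈ ⋃₀ {Z | Z ∈ M.mu ∧ Z ⊂ (Y : Set Ordinal)} := by
          rw [← hneat]; exact haY
        obtain ⟨Za, ⟨hZamu, hZaY⟩, haZa⟩ := haU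
        obtain ⟨Z', hZ'mu, hZ'Y, hZZ', hZaZ'⟩ := ha Z Z.2 Za hZamu hZY hZaY
        refine ⟨⟨Z', hZ'mu⟩, hZ'Y, ?_, hrkZ.trans (M.rank_le_of_subset (Z := Z) hZZ')⟩
        rw [Finset.coe_insert, Set.insert_subset_iff]
        exact ⟨hZaZ' haZa, hsZ.trans hZZ'⟩
    obtain ⟨Z, hZY, hFZ, hrkZ⟩ := merge F hFY
    obtain ⟨X', hor, hFX', hrkX'⟩ := IH Z hZY X F hFX hFZ hrkZ
    have hX'Z : (X' : Set Ordinal) ⊆ (Z : Set Ordinal) := by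
      rcases hor with h | h
      · exact h.subset
      · exact subset_of_eq h
    exact ⟨X', Or.inl (ssub_trans' hX'Z hZY), hFX', hrkX'⟩
  · -- star case
    obtain ⟨hW₁, hW₂⟩ := M.star_mem hdec
    have hb : M.wf.rank Y ≤ Order.succ (M.wf.rank X₁) := by
      rw [M.wf.rank_eq (a := Y)]
      apply Ordinal.iSup_le
      rintro ⟨b, hbY⟩
      apply Order.succ_le_succ
      have : (b : Set Ordinal) ∈ {Z | Z ∈ M.mu ∧ Z ⊂ (Y : Set Ordinal)} := ⟨b.2, hbY⟩
      rw [hdec] at this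
      rcases this with (⟨_, h⟩ | ⟨_, h⟩) | h
      · exact (M.rank_lt_of_ssubset h).le
      · exact ((M.rank_lt_of_ssubset h).trans_eq hr12.symm).le
      · rcases Set.mem_insert_iff.1 h with h | h
        · exact le_of_eq (congrArg M.wf.rank (Subtype.ext h))
        · exact le_of_eq ((congrArg M.wf.rank
            (Subtype.ext (Set.mem_singleton_iff.1 h))).trans hr12.symm)
    have hle1 : M.wf.rank X ≤ M.wf.rank X₁ := Order.lt_succ_iff.1 (hlt.trans_le hb)
    have hle2 : M.wf.rank X ≤ M.wf.rank X₂ := hle1.trans hr12.le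
    have hFsub : ↑F ⊆ (X₁ : Set Ordinal) ∪ (X₂ : Set Ordinal) := by
      rw [← hstar.2.1]; exact hFY
    by_cases hc1 : (F : Set Ordinal) ⊆ (X₁ : Set Ordinal)
    · obtain ⟨X', hor, h2, h3⟩ := IH X₁ hW₁ X F hFX hc1 hle1
      have hX'sub : (X' : Set Ordinal) ⊆ (X₁ : Set Ordinal) := by
        rcases hor with h | h
        · exact h.subset
        · exact subset_of_eq h
      exact ⟨X', Or.inl (ssub_trans' hX'sub hW₁), h2, h3⟩
    by_cases hc2 : (F : Set Ordinal) ⊆ (X₂ : Set Ordinal)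
    · obtain ⟨X', hor, h2, h3⟩ := IH X₂ hW₂ X F hFX hc2 hle2
      have hX'sub : (X' : Set Ordinal) ⊆ (X₂ : Set Ordinal) := by
        rcases hor with h | h
        · exact h.subset
        · exact subset_of_eq h
      exact ⟨X', Or.inl (ssub_trans' hX'sub hW₂), h2, h3⟩
    exfalso
    obtain ⟨a, haF, haX₁⟩ := Set.not_subset.1 hc1
    obtain ⟨c, hcF, hcX₂⟩ := Set.not_subset.1 hc2
    have haX₂ : a ∈ (X₂ : Set Ordinal) := (hFsub haF).resolve_left haX₁
    have hcX₁ : c ∈ (X₁ : Set Ordinal) := (hFsub hcF).resolve_right hcX₂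
    have hca : c < a := hstar.2.2.2 c ⟨hcX₁, hcX₂⟩ a ⟨haX₂, haX₁⟩
    have hsub := M.coh (X := X) (Z := X₂) hle2 (hFX haF) haX₂
    exact hcX₂ (hsub ⟨hFX hcF, hca⟩)

end TwoCardinal

/-- The localization lemma. -/
theorem localization_lemma (κ : Cardinal) (hκ : κ.IsRegular) (M : TwoCardinal κ)
    (F : Finset Ordinal) (hne : F.Nonempty) (hF : ↑F ⊆ Set.Iio (Order.succ κ).ord)
    (η : Ordinal) (X : M.mu) (hrkX : M.rank X = η) (hFX : ↑F ⊆ (X : Set Ordinal))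
    (Y : M.mu) (hFY : ↑F ⊆ (Y : Set Ordinal)) (hη : η ≤ M.rank Y) :
    ∃ X' : M.mu, ((X' : Set Ordinal) ⊂ (Y : Set Ordinal) ∨ X' = Y) ∧
      ↑F ⊆ (X' : Set Ordinal) ∧ M.rank X' = η ∧
      (X : Set Ordinal) ∩ Set.Iio (F.max' hne) = (X' : Set Ordinal) ∩ Set.Iio (F.max' hne) ∧
      (X' : Set Ordinal) ∩ Set.Iio (F.max' hne) ⊆ (Y : Set Ordinal) := by
  have hlift : M.wf.rank X ≤ M.wf.rank Y := by
    rw [← M.rank_le_rank_iff, hrkX]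
    exact hη
  obtain ⟨X', hor, hFX', hrkX'⟩ := M.loc_aux Y X F hFX hFY hlift
  have hrkη : M.rank X' = η := by
    rw [← hrkX, M.rank_eq_rank_iff]
    exact hrkX'
  have hsub : (X' : Set Ordinal) ⊆ (Y : Set Ordinal) := by
    rcases hor with h | h
    · exact h.subset
    · exact subset_of_eq h
  have hmF : (F.max' hne : Ordinal) ∈ (F : Set Ordinal) := Finset.mem_coe.2 (F.max'_mem hne)
  have hseg1 : (X : Set Ordinal) ∩ Set.Iio (F.max' hne) ⊆ (X' : Set Ordinal) :=
    M.coh hrkX'.ge (hFX hmF) (hFX' hmF)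
  have hseg2 : (X' : Set Ordinal) ∩ Set.Iio (F.max' hne) ⊆ (X : Set Ordinal) :=
    M.coh hrkX'.le (hFX' hmF) (hFX hmF)
  refine ⟨X', ?_, hFX', hrkη, ?_, fun γ hγ => hsub hγ.1⟩
  · rcases hor with h | h
    · exact Or.inl h
    · exact Or.inr (Subtype.ext h)
  · apply Set.Subset.antisymm
    · intro γ hγ; exact ⟨hseg1 hγ, hγ.2⟩
    · intro γ hγ; exact ⟨hseg2 hγ, hγ.2⟩
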